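/- Two elements of a free group are conjugate if and only if their cyclically reduced forms are cyclic rotations of each other (as reduced words). -/

import Mathlib

/-- `a` and `b` are mutually inverse letters. -/
def IsInvPair {α : Type*} (a b : α × Bool) : Prop := a.1 = b.1 ∧ a.2 = !b.2

/-- A reduced word is cyclically reduced if its first and last letters are not
mutually inverse. -/
def CyclRedWord {α : Type*} (l : List (α × Bool)) : Prop :=
  ∀ a b, l.head? = some a → l.getLast? = some b → ¬ IsInvPair a b

namespace CyclAux

variable {α : Type*}

/-- The inverse letter. -/
def linv (a : α × Bool) : α × Bool := (a.1, !a.2)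

@[simp] lemma linv_linv (a : α × Bool) : linv (linv a) = a := by simp [linv]

lemma isInvPair_iff {a b : α × Bool} : IsInvPair a b ↔ a = linv b := by
  simp [IsInvPair, linv, Prod.ext_iff]

lemma isInvPair_comm {a b : α × Bool} : IsInvPair a b ↔ IsInvPair b a := by
  simp only [isInvPair_iff]
  constructor
  · rintro rfl; simp
  · rintro rfl; simp

lemma not_isInvPair_self (a : α × Bool) : ¬ IsInvPair a a := by
  rintro ⟨-, h⟩; simp at h

lemma isInvPair_linv_linv {a b : α × Bool} : IsInvPair (linv a) (linv b) ↔ IsInvPair b a := by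
  simp only [isInvPair_iff, linv_linv]
  constructor
  · rintro rfl; simp
  · rintro rfl; simp

/-- A word is reduced iff no adjacent letters are mutually inverse. -/
def Reduced (l : List (α × Bool)) : Prop := List.Chain' (fun a b => ¬ IsInvPair a b) l

lemma Reduced.tail {x : α × Bool} {l : List (α × Bool)} (h : Reduced (x :: l)) : Reduced l :=
  List.IsChain.tail h

lemma reduce_eq_self [DecidableEq α] {l : List (α × Bool)} (h : Reduced l) :
    FreeGroup.reduce l = l := by
  induction l with
  | nil => rfl
  | cons x l ih =>
    rw [FreeGroup.reduce.cons, ih h.tail]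
    cases l with
    | nil => rfl
    | cons y l' =>
      have hxy : ¬ IsInvPair x y := (List.isChain_cons_cons.mp h).1
      simp only [IsInvPair] at hxy
      simp [hxy]

lemma reduced_reduce [DecidableEq α] (l : List (α × Bool)) : Reduced (FreeGroup.reduce l) := by
  induction l with
  | nil => exact List.isChain_nil
  | cons x l ih =>
    rw [FreeGroup.reduce.cons]
    rcases h : FreeGroup.reduce l with _ | ⟨y, l'⟩
    · exact List.isChain_singleton x
    · rw [h] at ih
      by_cases hxy : x.1 = y.1 ∧ x.2 = !y.2
      · simpa [hxy] using ih.tail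
      · simp only [hxy, if_false]
        exact List.isChain_cons_cons.mpr ⟨hxy, ih⟩

lemma reduced_toWord [DecidableEq α] (x : FreeGroup α) : Reduced x.toWord := by
  rw [← FreeGroup.reduce_toWord]; exact reduced_reduce _

lemma toWord_mk_eq [DecidableEq α] {l : List (α × Bool)} (h : Reduced l) :
    (FreeGroup.mk l).toWord = l := by
  rw [FreeGroup.toWord_mk, reduce_eq_self h]

lemma reduced_invRev {l : List (α × Bool)} (h : Reduced l) : Reduced (FreeGroup.invRev l) := by
  unfold FreeGroup.invRev Reduced List.Chain'
  rw [List.isChain_reverse, List.isChain_map]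
  refine List.IsChain.imp ?_ h
  intro a b hab hk
  exact hab ((isInvPair_linv_linv (a := b) (b := a)).mp hk)

lemma mk_inv_singleton (x : α × Bool) : (FreeGroup.mk [x])⁻¹ = FreeGroup.mk [linv x] := by
  rw [FreeGroup.inv_mk]; rfl

lemma mk_cancel_left (x : α × Bool) (r : List (α × Bool)) :
    FreeGroup.mk (linv x :: x :: r) = FreeGroup.mk r := by
  have h : FreeGroup.mk (linv x :: x :: r)
      = (FreeGroup.mk [x])⁻¹ * FreeGroup.mk [x] * FreeGroup.mk r := by
    rw [mk_inv_singleton, FreeGroup.mul_mk, FreeGroup.mul_mk]; rfl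
  rw [h, inv_mul_cancel, one_mul]

lemma mk_cancel_right (x : α × Bool) (r : List (α × Bool)) :
    FreeGroup.mk (r ++ [x, linv x]) = FreeGroup.mk r := by
  have h : FreeGroup.mk (r ++ [x, linv x])
      = FreeGroup.mk r * (FreeGroup.mk [x] * (FreeGroup.mk [x])⁻¹) := by
    rw [mk_inv_singleton, FreeGroup.mul_mk, FreeGroup.mul_mk]; rfl
  rw [h, mul_inv_cancel, mul_one]

lemma head?_invRev (l : List (α × Bool)) :
    (FreeGroup.invRev l).head? = l.getLast?.map linv := by
  unfold FreeGroup.invRev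
  rw [List.head?_reverse, List.getLast?_map]; rfl

lemma getLast?_invRev (l : List (α × Bool)) :
    (FreeGroup.invRev l).getLast? = l.head?.map linv := by
  unfold FreeGroup.invRev
  rw [List.getLast?_reverse]
  cases l <;> rfl

lemma linv_eq_comm {a b : α × Bool} : a = linv b ↔ b = linv a := by
  constructor <;> (rintro rfl; simp)

lemma getLast?_cons' (a : α × Bool) (l : List (α × Bool)) :
    (a :: l).getLast? = l.getLast?.or (some a) := by
  rw [show (a :: l) = [a] ++ l from rfl, List.getLast?_append]; rfl

lemma key [DecidableEq α] :
    ∀ n (c v₁ v₂ : FreeGroup α), c.toWord.length ≤ n →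
      CyclRedWord v₁.toWord → CyclRedWord v₂.toWord → v₂ = c⁻¹ * v₁ * c →
      ∃ k, v₂.toWord = v₁.toWord.rotate k := by
  intro n
  induction n with
  | zero =>
    intro c v₁ v₂ hlen hc₁ hc₂ heq
    have hc : c = 1 := FreeGroup.toWord_eq_nil_iff.mp
      (List.length_eq_zero_iff.mp (Nat.le_zero.mp hlen))
    exact ⟨0, by rw [heq, hc]; simp⟩
  | succ n ih =>
    intro c v₁ v₂ hlen hc₁ hc₂ heq
    rcases hv₁w : v₁.toWord with _ | ⟨a, s⟩
    · have hv1 : v₁ = 1 := FreeGroup.toWord_eq_nil_iff.mp hv₁w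
      exact ⟨0, by rw [heq, hv1]; simp [hv₁w]⟩
    rcases hcw : c.toWord with _ | ⟨x, t⟩
    · have hc : c = 1 := FreeGroup.toWord_eq_nil_iff.mp hcw
      exact ⟨0, by rw [heq, hc]; simp [hv₁w]⟩
    rw [hv₁w] at hc₁
    have hred : Reduced (x :: t) := by rw [← hcw]; exact reduced_toWord c
    have hredt : Reduced t := hred.tail
    have hct : (FreeGroup.mk t).toWord = t := toWord_mk_eq hredt
    have hlent : (FreeGroup.mk t).toWord.length ≤ n := by
      rw [hct]
      have h1 : (x :: t).length ≤ n + 1 := by rw [← hcw]; exact hlen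
      simpa using h1
    have hv₁red : Reduced (a :: s) := by rw [← hv₁w]; exact reduced_toWord v₁
    have hv₁mk : v₁ = FreeGroup.mk (a :: s) := by rw [← hv₁w, FreeGroup.mk_toWord]
    have hcsplit : c = FreeGroup.mk [x] * FreeGroup.mk t := by
      rw [FreeGroup.mul_mk, List.singleton_append, ← hcw, FreeGroup.mk_toWord]
    have heq' : v₂ = (FreeGroup.mk t)⁻¹ *
        ((FreeGroup.mk [x])⁻¹ * v₁ * FreeGroup.mk [x]) * FreeGroup.mk t := by
      rw [heq, hcsplit]; group
    by_cases hxa : x = a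
    · -- rotate left by one
      have hM : (FreeGroup.mk [x])⁻¹ * v₁ * FreeGroup.mk [x]
          = FreeGroup.mk (s ++ [a]) := by
        rw [hxa, hv₁mk, mk_inv_singleton, FreeGroup.mul_mk, FreeGroup.mul_mk]
        exact mk_cancel_left a (s ++ [a])
      have hred' : Reduced (s ++ [a]) := by
        refine List.isChain_append.mpr ⟨hv₁red.tail, List.isChain_singleton a, ?_⟩
        intro p hp q hq
        simp only [List.head?_cons, Option.mem_def, Option.some.injEq] at hq
        subst hq
        have hps : (a :: s).getLast? = some p := by
          rw [getLast?_cons', hp]; rfl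
        exact fun h => hc₁ a p rfl hps (isInvPair_comm.mp h)
      have hcyc' : CyclRedWord (s ++ [a]) := by
        intro p q hp hq
        have hq' : a = q := by
          rw [List.getLast?_append] at hq
          simpa using hq
        subst hq'
        rcases s with _ | ⟨y, s₀⟩
        · simp only [List.nil_append, List.head?_cons, Option.some.injEq] at hp
          subst hp; exact not_isInvPair_self a
        · simp only [List.cons_append, List.head?_cons, Option.some.injEq] at hp
          subst hp
          have hxy : ¬ IsInvPair a y := (List.isChain_cons_cons.mp hv₁red).1
          exact fun h => hxy (isInvPair_comm.mp h)
      obtain ⟨k, hk⟩ := ih (FreeGroup.mk t) (FreeGroup.mk (s ++ [a])) v₂ hlent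
        (by rw [toWord_mk_eq hred']; exact hcyc') hc₂ (by rw [heq', hM])
      refine ⟨k + 1, ?_⟩
      rw [List.rotate_cons_succ]
      rw [toWord_mk_eq hred'] at hk
      exact hk
    · -- last-letter decomposition
      have hne : (a :: s) ≠ [] := by simp
      set b := (a :: s).getLast hne with hb
      set s' := (a :: s).dropLast with hs'
      have hsp : s' ++ [b] = a :: s := List.dropLast_append_getLast hne
      have hbl : (a :: s).getLast? = some b := List.getLast?_eq_getLast hne
      by_cases hxb : x = linv b
      · -- rotate right by one
        have hM : (FreeGroup.mk [x])⁻¹ * v₁ * FreeGroup.mk [x]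
            = FreeGroup.mk (b :: s') := by
          rw [hv₁mk, ← hsp, mk_inv_singleton, FreeGroup.mul_mk, FreeGroup.mul_mk]
          rw [hxb]
          have hl : ([linv (linv b)] ++ (s' ++ [b])) ++ [linv b]
              = (b :: s') ++ [b, linv b] := by simp
          rw [hl, mk_cancel_right]
        have hv₁red' : Reduced (s' ++ [b]) := by rw [hsp]; exact hv₁red
        obtain ⟨hch1, hch2, hch3⟩ := List.isChain_append.mp hv₁red'
        have hred' : Reduced (b :: s') := by
          refine List.isChain_cons.mpr ⟨?_, hch1⟩
          intro y hy
          have hha : (s' ++ [b]).head? = some y := by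
            rw [List.head?_append, hy]; rfl
          rw [hsp] at hha
          simp only [List.head?_cons, Option.some.injEq] at hha
          subst hha
          exact fun h => hc₁ a b rfl hbl (isInvPair_comm.mp h)
        have hcyc' : CyclRedWord (b :: s') := by
          intro p q hp hq
          simp only [List.head?_cons, Option.some.injEq] at hp
          subst hp
          rw [getLast?_cons'] at hq
          rcases hsq : s'.getLast? with _ | q'
          · rw [hsq] at hq
            simp only [Option.none_or, Option.some.injEq] at hq
            subst hq; exact not_isInvPair_self b
          · rw [hsq] at hq
            have hq2 : q' = q := by
              have h5 : some q' = some q := hq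
              injection h5
            subst hq2
            have := hch3 q' hsq b (by rfl)
            exact fun h => this (isInvPair_comm.mp h)
        obtain ⟨k, hk⟩ := ih (FreeGroup.mk t) (FreeGroup.mk (b :: s')) v₂ hlent
          (by rw [toWord_mk_eq hred']; exact hcyc') hc₂ (by rw [heq', hM])
        refine ⟨s'.length + k, ?_⟩
        have hrot : (a :: s).rotate s'.length = b :: s' := by
          rw [← hsp, List.rotate_eq_drop_append_take (by simp), List.drop_left,
            List.take_left]
          rfl
        rw [← List.rotate_rotate, hrot]
        rw [toWord_mk_eq hred'] at hk
        exact hk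
      · -- contradiction: v₂ would not be cyclically reduced
        exfalso
        set W : List (α × Bool) := linv x :: ((a :: s) ++ [x]) with hW
        have hMW : (FreeGroup.mk [x])⁻¹ * v₁ * FreeGroup.mk [x] = FreeGroup.mk W := by
          rw [hv₁mk, mk_inv_singleton, FreeGroup.mul_mk, FreeGroup.mul_mk]
          rfl
        have hWred : Reduced W := by
          refine List.isChain_cons.mpr ⟨?_, ?_⟩
          · intro y hy
            simp only [List.cons_append, List.head?_cons, Option.mem_def,
              Option.some.injEq] at hy
            subst hy
            rw [isInvPair_iff]
            intro h
            exact hxa (by simpa using congrArg linv h)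
          · refine List.isChain_append.mpr ⟨hv₁red, List.isChain_singleton x, ?_⟩
            intro p hp q hq
            simp only [List.head?_cons, Option.mem_def, Option.some.injEq] at hq
            subst hq
            rw [Option.mem_def, hbl] at hp
            injection hp with hp; subst hp
            rw [isInvPair_iff]
            intro h
            exact hxb (linv_eq_comm.mp h)
        have hWlast : W.getLast? = some x := by
          rw [hW, getLast?_cons', List.getLast?_append]
          rfl
        have hv₂eq : v₂ = FreeGroup.mk (FreeGroup.invRev t ++ (W ++ t)) := by
          rw [heq', hMW, FreeGroup.inv_mk, FreeGroup.mul_mk, FreeGroup.mul_mk]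
          rw [List.append_assoc]
        have hxhead : ∀ q ∈ t.head?, ¬ IsInvPair x q := (List.isChain_cons.mp hred).1
        have hVred : Reduced (FreeGroup.invRev t ++ (W ++ t)) := by
          refine List.isChain_append.mpr ⟨reduced_invRev hredt, ?_, ?_⟩
          · refine List.isChain_append.mpr ⟨hWred, hredt, ?_⟩
            intro p hp q hq
            rw [Option.mem_def, hWlast] at hp
            injection hp with hp; subst hp
            exact hxhead q hq
          · intro p hp q hq
            rw [Option.mem_def, getLast?_invRev] at hp
            have hq' : linv x = q := by
              rw [Option.mem_def, List.head?_append, hW] at hq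
              simpa using hq
            subst hq'
            rcases hth : t.head? with _ | h
            · rw [hth] at hp; cases hp
            · rw [hth] at hp
              injection hp with hp
              subst hp
              have hxh := hxhead h (by rw [hth]; rfl)
              intro hcontr
              exact hxh (isInvPair_linv_linv.mp hcontr)
        rw [hv₂eq, toWord_mk_eq hVred] at hc₂
        by_cases hte : t = []
        · subst hte
          refine hc₂ (linv x) x ?_ ?_ (isInvPair_iff.mpr rfl)
          · simp [FreeGroup.invRev, hW]
          · simp only [List.append_nil]
            rw [List.getLast?_append, hWlast]
            simp [FreeGroup.invRev]
        · have hlt : t.getLast? = some (t.getLast hte) := List.getLast?_eq_getLast hte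
          refine hc₂ (linv (t.getLast hte)) (t.getLast hte) ?_ ?_ (isInvPair_iff.mpr rfl)
          · rw [List.head?_append, head?_invRev, hlt]
            rfl
          · rw [List.getLast?_append, List.getLast?_append, hlt]
            rfl

end CyclAux

/-- Two elements of a free group are conjugate iff their cyclically reduced
forms are cyclic rotations of each other. -/
theorem freeGroup_isConj_iff_rotate {α : Type*} [DecidableEq α]
    (w₁ w₂ v₁ v₂ : FreeGroup α)
    (h₁ : ∃ u, w₁ = u⁻¹ * v₁ * u) (hc₁ : CyclRedWord v₁.toWord)
    (h₂ : ∃ u, w₂ = u⁻¹ * v₂ * u) (hc₂ : CyclRedWord v₂.toWord) :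
    IsConj w₁ w₂ ↔ ∃ k, v₂.toWord = v₁.toWord.rotate k := by
  obtain ⟨u₁, hu₁⟩ := h₁
  obtain ⟨u₂, hu₂⟩ := h₂
  constructor
  · intro hconj
    obtain ⟨g, hg⟩ := isConj_iff.mp hconj
    refine CyclAux.key ((u₁ * g⁻¹ * u₂⁻¹).toWord.length) (u₁ * g⁻¹ * u₂⁻¹) v₁ v₂ le_rfl hc₁ hc₂ ?_
    have h2 : v₂ = u₂ * w₂ * u₂⁻¹ := by rw [hu₂]; group
    rw [h2, ← hg, hu₁]
    group
  · rintro ⟨k, hk⟩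
    have hcj : IsConj v₁ v₂ := by
      rcases Nat.eq_zero_or_pos v₁.toWord.length with h0 | hpos
      · have hv1 : v₁ = 1 := FreeGroup.toWord_eq_nil_iff.mp (List.length_eq_zero_iff.mp h0)
        have hv2 : v₂ = 1 := FreeGroup.toWord_eq_nil_iff.mp
          (by rw [hk, List.length_eq_zero_iff.mp h0]; simp)
        rw [hv1, hv2]
      · set m := k % v₁.toWord.length with hm
        have hmle : m ≤ v₁.toWord.length := le_of_lt (Nat.mod_lt _ hpos)
        have hrot : v₁.toWord.rotate k = v₁.toWord.drop m ++ v₁.toWord.take m := by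
          rw [← List.rotate_mod, ← hm, List.rotate_eq_drop_append_take hmle]
        obtain ⟨T, D, hTD, hk'⟩ : ∃ T D, T ++ D = v₁.toWord ∧ v₂.toWord = D ++ T :=
          ⟨v₁.toWord.take m, v₁.toWord.drop m, List.take_append_drop _ _, by rw [hk, hrot]⟩
        have e1 : v₁ = FreeGroup.mk T * FreeGroup.mk D := by
          rw [FreeGroup.mul_mk, hTD, FreeGroup.mk_toWord]
        have e2 : v₂ = FreeGroup.mk D * FreeGroup.mk T := by
          rw [FreeGroup.mul_mk, ← hk', FreeGroup.mk_toWord]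
        refine isConj_iff.mpr ⟨(FreeGroup.mk T)⁻¹, ?_⟩
        rw [e1, e2]
        group
    have hw₁ : IsConj v₁ w₁ := isConj_iff.mpr ⟨u₁⁻¹, by rw [hu₁]; group⟩
    have hw₂ : IsConj v₂ w₂ := isConj_iff.mpr ⟨u₂⁻¹, by rw [hu₂]; group⟩
    exact hw₁.symm.trans (hcj.trans hw₂)
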